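/- Let f_1, …, f_P : ℝ^n → ℝ be continuously differentiable and suppose there is L > 0 such that each gradient ∇f_p is L-Lipschitz continuous; set f = ∑_{p=1}^P f_p. Let {w^k} ⊂ ℝ^n be a bounded sequence and {ζ^k} ⊂ (0, ∞) with ζ^k → 0. For each k let (h_1^k, …, h_P^k) be a permutation of {1, …, P}, define w̃_0^k = w^k and w̃_i^k = w̃_{i−1}^k − ζ^k ∇f_{h_i^k}(w̃_{i−1}^k) for i = 1, …, P. Then for every limit point w̄ of {w^k} there exists a strictly increasing map φ : ℕ → ℕ with w^{φ(k)} → w̄ such that the gradient approximation error vanishes along it: ‖∇f(w^{φ(k)}) − ∑_{i=1}^P ∇f_{h_i^{φ(k)}}(w̃_{i−1}^{φ(k)})‖ → 0 as k → ∞. -/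

import Mathlib

open Filter Finset

/-- vanishing gradient-approximation error.
If `{w^k}` is bounded and `ζ^k → 0`, then for every limit point `w̄` of `{w^k}`
there is a subsequence `φ` with `w^{φ(k)} → w̄` along which the error
`‖∇f(w^{φ(k)}) - ∑_{i=1}^P ∇f_{h_i^{φ(k)}}(w̃_{i-1}^{φ(k)})‖ → 0`,
where `f = ∑_{p=1}^P f_p`. -/
theorem stmt_3 {n P : ℕ}
    (f : Fin P → EuclideanSpace ℝ (Fin n) → ℝ)
    (hf : ∀ p, ContDiff ℝ 1 (f p))
    (L : ℝ) (hL : 0 < L)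
    (hlip : ∀ p (u v : EuclideanSpace ℝ (Fin n)),
      ‖gradient (f p) u - gradient (f p) v‖ ≤ L * ‖u - v‖)
    (w : ℕ → EuclideanSpace ℝ (Fin n)) (hwbdd : ∃ C, ∀ k, ‖w k‖ ≤ C)
    (ζ : ℕ → ℝ) (hζpos : ∀ k, 0 < ζ k)
    (hζto0 : Tendsto ζ atTop (nhds 0))
    (h : ℕ → ℕ → Fin P)
    (hperm : ∀ k, Function.Bijective (fun i : Fin P => h k i.val))
    (wt : ℕ → ℕ → EuclideanSpace ℝ (Fin n))
    (hinit : ∀ k, wt k 0 = w k)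
    (hiter : ∀ k, ∀ i, i < P →
      wt k (i + 1) = wt k i - ζ k • gradient (f (h k i)) (wt k i))
    (wbar : EuclideanSpace ℝ (Fin n))
    (hwbar : ∃ ψ : ℕ → ℕ, StrictMono ψ ∧
      Tendsto (fun k => w (ψ k)) atTop (nhds wbar)) :
    ∃ φ : ℕ → ℕ, StrictMono φ ∧
      Tendsto (fun k => w (φ k)) atTop (nhds wbar) ∧
      Tendsto
        (fun k =>
          ‖gradient (fun x => ∑ p : Fin P, f p x) (w (φ k)) -
            ∑ i ∈ Finset.range P, gradient (f (h (φ k) i)) (wt (φ k) i)‖)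
        atTop (nhds 0) := by
  obtain ⟨ψ, hψmono, hψtend⟩ := hwbar
  obtain ⟨C, hC⟩ := hwbdd
  have hC0 : (0 : ℝ) ≤ C := le_trans (norm_nonneg _) (hC 0)
  have hdiff : ∀ p, Differentiable ℝ (f p) := fun p => (hf p).differentiable one_ne_zero
  -- gradient of the sum is the sum of gradients
  have hgradsum : ∀ x, gradient (fun y => ∑ p : Fin P, f p y) x
      = ∑ p : Fin P, gradient (f p) x := by
    intro x
    unfold gradient
    rw [fderiv_fun_sum (fun p _ => (hdiff p).differentiableAt), map_sum]
  -- reindexing by the permutation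
  have hreindex : ∀ k (g : Fin P → EuclideanSpace ℝ (Fin n)),
      ∑ p : Fin P, g p = ∑ i ∈ Finset.range P, g (h k i) := by
    intro k g
    rw [Finset.sum_range fun i => g (h k i)]
    exact (Fintype.sum_bijective _ (hperm k) _ _ (fun i => rfl)).symm
  -- uniform bound on gradients at the w k
  set S : ℝ := ∑ p : Fin P, ‖gradient (f p) 0‖ with hS
  have hS0 : 0 ≤ S := Finset.sum_nonneg fun p _ => norm_nonneg _
  set M : ℝ := S + L * C with hM
  have hM0 : 0 ≤ M := by positivity
  have hgradb : ∀ p k, ‖gradient (f p) (w k)‖ ≤ M := by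
    intro p k
    have h1 : ‖gradient (f p) (w k)‖ - ‖gradient (f p) 0‖
        ≤ ‖gradient (f p) (w k) - gradient (f p) 0‖ := norm_sub_norm_le _ _
    have h2 := hlip p (w k) 0
    have h3 : ‖gradient (f p) 0‖ ≤ S :=
      Finset.single_le_sum (f := fun p => ‖gradient (f p) 0‖)
        (fun q _ => norm_nonneg _) (Finset.mem_univ p)
    have h4 : ‖w k - 0‖ ≤ C := by simpa using hC k
    have h5 : L * ‖w k - 0‖ ≤ L * C := by nlinarith
    simp only [hM]; linarith
  -- the recursive bound sequence
  set B : ℕ → ℝ := fun i => Nat.rec 0 (fun _ b => (1 + L) * b + M) i with hB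
  have hB0 : B 0 = 0 := rfl
  have hBsucc : ∀ i, B (i + 1) = (1 + L) * B i + M := fun i => rfl
  have hBnn : ∀ i, 0 ≤ B i := by
    intro i
    induction i with
    | zero => simp [hB0]
    | succ i ih => rw [hBsucc]; nlinarith
  -- the key iterate bound
  have hbound : ∀ k, ζ k ≤ 1 → ∀ i, i ≤ P → ‖wt k i - w k‖ ≤ ζ k * B i := by
    intro k hζ1 i
    induction i with
    | zero => intro _; simp [hinit k, hB0]
    | succ i ih =>
      intro hiP
      have hiP' : i < P := Nat.lt_of_succ_le hiP
      have ih' := ih (le_of_lt hiP')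
      have hgi : ‖gradient (f (h k i)) (wt k i)‖ ≤ M + L * (ζ k * B i) := by
        have h1 : ‖gradient (f (h k i)) (wt k i)‖ - ‖gradient (f (h k i)) (w k)‖
            ≤ ‖gradient (f (h k i)) (wt k i) - gradient (f (h k i)) (w k)‖ :=
          norm_sub_norm_le _ _
        have h2 := hlip (h k i) (wt k i) (w k)
        have h3 := hgradb (h k i) k
        nlinarith [hζpos k, hBnn i]
      rw [hiter k i hiP']
      have : wt k i - ζ k • gradient (f (h k i)) (wt k i) - w k
          = (wt k i - w k) - ζ k • gradient (f (h k i)) (wt k i) := by abel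
      rw [this]
      calc ‖(wt k i - w k) - ζ k • gradient (f (h k i)) (wt k i)‖
          ≤ ‖wt k i - w k‖ + ‖ζ k • gradient (f (h k i)) (wt k i)‖ := norm_sub_le _ _
        _ = ‖wt k i - w k‖ + ζ k * ‖gradient (f (h k i)) (wt k i)‖ := by
            rw [norm_smul, Real.norm_eq_abs, abs_of_pos (hζpos k)]
        _ ≤ ζ k * B i + ζ k * (M + L * (ζ k * B i)) := by
            have := mul_le_mul_of_nonneg_left hgi (le_of_lt (hζpos k))
            linarith
        _ ≤ ζ k * B (i + 1) := by
            rw [hBsucc]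
            nlinarith [mul_nonneg (mul_nonneg (mul_nonneg (le_of_lt (hζpos k)) hL.le)
              (hBnn i)) (sub_nonneg.mpr hζ1)]
  -- the error bound
  set D : ℝ := L * ∑ i ∈ Finset.range P, B i with hD
  have herr : ∀ k, ζ k ≤ 1 →
      ‖gradient (fun x => ∑ p : Fin P, f p x) (w k) -
        ∑ i ∈ Finset.range P, gradient (f (h k i)) (wt k i)‖ ≤ ζ k * D := by
    intro k hζ1
    rw [hgradsum, hreindex k, ← Finset.sum_sub_distrib]
    calc ‖∑ i ∈ Finset.range P,
            (gradient (f (h k i)) (w k) - gradient (f (h k i)) (wt k i))‖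
        ≤ ∑ i ∈ Finset.range P,
            ‖gradient (f (h k i)) (w k) - gradient (f (h k i)) (wt k i)‖ :=
          norm_sum_le _ _
      _ ≤ ∑ i ∈ Finset.range P, L * (ζ k * B i) := by
          apply Finset.sum_le_sum
          intro i hi
          have h1 := hlip (h k i) (w k) (wt k i)
          have h2 := hbound k hζ1 i (le_of_lt (Finset.mem_range.mp hi))
          rw [norm_sub_rev] at h2
          nlinarith
      _ = ζ k * D := by
          rw [hD, Finset.mul_sum, Finset.mul_sum]
          exact Finset.sum_congr rfl fun i _ => by ring
  -- conclude
  refine ⟨ψ, hψmono, hψtend, ?_⟩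
  have hζψ : Tendsto (fun k => ζ (ψ k)) atTop (nhds 0) :=
    hζto0.comp hψmono.tendsto_atTop
  have hev : ∀ᶠ k in atTop, ζ (ψ k) ≤ 1 := by
    have := hζψ (Iio_mem_nhds (show (0:ℝ) < 1 by norm_num))
    filter_upwards [this] with k hk
    exact le_of_lt hk
  have hDten : Tendsto (fun k => ζ (ψ k) * D) atTop (nhds 0) := by
    have := hζψ.mul_const D
    simpa using this
  apply squeeze_zero' (Eventually.of_forall fun k => norm_nonneg _) _ hDten
  filter_upwards [hev] with k hk
  exact herr (ψ k) hk
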